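/- T_H semantically entails H⁺ ∈ H⁺. -/

import Mathlib

open FirstOrder FirstOrder.Language

namespace CoRussellParadox

/-- The language `L'` with a single binary relation symbol `∈` and four constant
symbols `A`, `B`, `H⁺`, `H⁻` (coded as `Fin 4`). -/
def L : Language :=
  ⟨fun n => match n with | 0 => Fin 4 | _ => Empty,
   fun n => match n with | 2 => Unit | _ => Empty⟩

/-- The membership relation symbol. -/
def memRel : L.Relations 2 := Unit.unit

/-- The constant symbol `A`. -/
def cA : L.Constants := (0 : Fin 4)
/-- The constant symbol `B`. -/
def cB : L.Constants := (1 : Fin 4)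
/-- The constant symbol `H⁺`. -/
def cHp : L.Constants := (2 : Fin 4)
/-- The constant symbol `H⁻`. -/
def cHm : L.Constants := (3 : Fin 4)

/-- `memF t₁ t₂` is the atomic formula `t₁ ∈ t₂`. -/
def memF {n : ℕ} (t₁ t₂ : L.Term (Empty ⊕ Fin n)) : L.BoundedFormula Empty n :=
  memRel.boundedFormula₂ t₁ t₂

/-- Inclusion of a term in context `n` into the larger context `n + k`. -/
def tl {n : ℕ} (k : ℕ) (t : L.Term (Empty ⊕ Fin n)) : L.Term (Empty ⊕ Fin (n + k)) :=
  t.relabel (Sum.map id (Fin.castAdd k))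

/-- `z = ⟨a,b⟩` (Kuratowski pair), as the formula
`∃p∃q(∀x(x∈p ↔ x=a) ∧ ∀x(x∈q ↔ (x=a ∨ x=b)) ∧ ∀x(x∈z ↔ (x=p ∨ x=q)))`. -/
def isPairF {n : ℕ} (z a b : L.Term (Empty ⊕ Fin n)) : L.BoundedFormula Empty n :=
  ∃' ∃' (
    (∀' (memF (&⟨n + 2, by omega⟩) (&⟨n, by omega⟩) ⇔
        ((&(⟨n + 2, by omega⟩ : Fin (n + 3))) =' tl 3 a))) ⊓
    (∀' (memF (&⟨n + 2, by omega⟩) (&⟨n + 1, by omega⟩) ⇔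
        (((&(⟨n + 2, by omega⟩ : Fin (n + 3))) =' tl 3 a) ⊔
         ((&(⟨n + 2, by omega⟩ : Fin (n + 3))) =' tl 3 b)))) ⊓
    (∀' (memF (&⟨n + 2, by omega⟩) (tl 3 z) ⇔
        (((&(⟨n + 2, by omega⟩ : Fin (n + 3))) =' (&⟨n, by omega⟩)) ⊔
         ((&(⟨n + 2, by omega⟩ : Fin (n + 3))) =' (&⟨n + 1, by omega⟩))))))

/-- Extensionality: `∀y∀z(∀x(x∈y ↔ x∈z) → y=z)`. -/
def extAx : L.Sentence :=
  ∀' ∀' ((∀' (memF (&2) (&0) ⇔ memF (&2) (&1))) ⟹ ((&0) =' (&1)))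

/-- Pairing: `∀a∀b∃y∀x(x∈y ↔ (x=a ∨ x=b))`. -/
def pairAx : L.Sentence :=
  ∀' ∀' ∃' ∀' (memF (&3) (&2) ⇔ (((&3) =' (&0)) ⊔ ((&3) =' (&1))))

/-- Extracting: `∀a∃y∀x(x∈y ↔ ∃z(z=⟨a,x⟩ ∧ z∈a))`. -/
def extractAx : L.Sentence :=
  ∀' ∃' ∀' (memF (&2) (&1) ⇔ ∃' (isPairF (&3) (&0) (&2) ⊓ memF (&3) (&0)))

/-- `w = v[v]`, i.e. `∀u(u∈w ↔ ∃z(z=⟨v,u⟩ ∧ z∈v))`, here with `v = &1`, `w = &2`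
in context `3` (as used in the axioms for `A` and `B`). -/
def wEqExtractF : L.BoundedFormula Empty 3 :=
  ∀' (memF (&3) (&2) ⇔ ∃' (isPairF (&4) (&1) (&3) ⊓ memF (&4) (&1)))

/-- The axiom `∀x(x∈A ↔ ∃v∃w(x=⟨v,w⟩ ∧ (w∈w ∨ w=v[v])))`. -/
def axA : L.Sentence :=
  ∀' (memF (&0) (Constants.term cA) ⇔
    ∃' ∃' (isPairF (&0) (&1) (&2) ⊓ (memF (&2) (&2) ⊔ wEqExtractF)))

/-- The axiom `∀x(x∈B ↔ ∃v∃w(x=⟨v,w⟩ ∧ (w∈w ∧ ¬w=v[v])))`. -/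
def axB : L.Sentence :=
  ∀' (memF (&0) (Constants.term cB) ⇔
    ∃' ∃' (isPairF (&0) (&1) (&2) ⊓ (memF (&2) (&2) ⊓ ∼wEqExtractF)))

/-- The axiom `∀x(x∈H⁺ ↔ ∃z(z=⟨A,x⟩ ∧ z∈A))`. -/
def axHp : L.Sentence :=
  ∀' (memF (&0) (Constants.term cHp) ⇔
    ∃' (isPairF (&1) (Constants.term cA) (&0) ⊓ memF (&1) (Constants.term cA)))

/-- The axiom `∀x(x∈H⁻ ↔ ∃z(z=⟨B,x⟩ ∧ z∈B))`. -/
def axHm : L.Sentence :=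
  ∀' (memF (&0) (Constants.term cHm) ⇔
    ∃' (isPairF (&1) (Constants.term cB) (&0) ⊓ memF (&1) (Constants.term cB)))

/-- The theory `T_H`: extensionality, pairing, extracting, and the defining axioms
of `A`, `B`, `H⁺` and `H⁻`. -/
def TH : L.Theory := {extAx, pairAx, extractAx, axA, axB, axHp, axHm}


section Aux
set_option linter.unusedSectionVars false

variable {M : Type*} [L.Structure M]

/-- Semantic membership. -/
def mem (x y : M) : Prop := Structure.RelMap memRel ![x, y]

/-- Semantic Kuratowski pair predicate. -/
def IsPair (z a b : M) : Prop :=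
  ∃ p q : M, (∀ x, mem x p ↔ x = a) ∧ (∀ x, mem x q ↔ x = a ∨ x = b) ∧
    (∀ x, mem x z ↔ x = p ∨ x = q)

lemma snoc3_2 {n : ℕ} (xs : Fin n → M) (p q x : M) :
    (Fin.snoc (Fin.snoc (Fin.snoc xs p) q) x : Fin (n+3) → M) ⟨n + 2, by omega⟩ = x := by
  have : (⟨n + 2, by omega⟩ : Fin (n+3)) = Fin.last (n+2) := rfl
  rw [this, Fin.snoc_last]

lemma snoc3_1 {n : ℕ} (xs : Fin n → M) (p q x : M) :
    (Fin.snoc (Fin.snoc (Fin.snoc xs p) q) x : Fin (n+3) → M) ⟨n + 1, by omega⟩ = q := by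
  have : (⟨n + 1, by omega⟩ : Fin (n+3)) = Fin.castSucc (Fin.last (n+1)) := rfl
  rw [this, Fin.snoc_castSucc, Fin.snoc_last]

lemma snoc3_0 {n : ℕ} (xs : Fin n → M) (p q x : M) :
    (Fin.snoc (Fin.snoc (Fin.snoc xs p) q) x : Fin (n+3) → M) ⟨n, by omega⟩ = p := by
  have : (⟨n, by omega⟩ : Fin (n+3)) = Fin.castSucc (Fin.castSucc (Fin.last n)) := rfl
  rw [this, Fin.snoc_castSucc, Fin.snoc_castSucc, Fin.snoc_last]

lemma snoc3_cast {n : ℕ} (xs : Fin n → M) (p q x : M) (i : Fin n) :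
    (Fin.snoc (Fin.snoc (Fin.snoc xs p) q) x : Fin (n+3) → M) (Fin.castAdd 3 i) = xs i := by
  have : (Fin.castAdd 3 i : Fin (n+3)) =
      Fin.castSucc (Fin.castSucc (Fin.castSucc i)) := rfl
  rw [this, Fin.snoc_castSucc, Fin.snoc_castSucc, Fin.snoc_castSucc]

lemma realize_tl {n : ℕ} (t : L.Term (Empty ⊕ Fin n)) (v : Empty → M) (xs : Fin n → M)
    (p q x : M) :
    (tl 3 t).realize (Sum.elim v (Fin.snoc (Fin.snoc (Fin.snoc xs p) q) x)) =
      t.realize (Sum.elim v xs) := by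
  rw [tl, Term.realize_relabel]
  congr 1
  funext s
  cases s with
  | inl e => rfl
  | inr i => exact snoc3_cast xs p q x i

lemma realize_isPairF {n : ℕ} (z a b : L.Term (Empty ⊕ Fin n)) (v : Empty → M)
    (xs : Fin n → M) :
    (isPairF z a b).Realize v xs ↔
      IsPair (z.realize (Sum.elim v xs)) (a.realize (Sum.elim v xs))
        (b.realize (Sum.elim v xs)) := by
  simp only [isPairF, memF, IsPair, mem, BoundedFormula.realize_ex, BoundedFormula.realize_inf,
    BoundedFormula.realize_all, BoundedFormula.realize_iff, BoundedFormula.realize_sup,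
    BoundedFormula.realize_bdEqual, BoundedFormula.realize_rel₂, Term.realize_var,
    Sum.elim_inr, Function.comp, realize_tl, snoc3_2, snoc3_1, snoc3_0]
  tauto

end Aux

section Aux2
set_option linter.unusedSectionVars false
variable {M : Type*} [L.Structure M] [Nonempty M]

lemma realize_pairAx (h : M ⊨ pairAx) :
    ∀ a b : M, ∃ y : M, ∀ x, mem x y ↔ x = a ∨ x = b := by
  simp only [pairAx, memF, mem, Sentence.Realize, Formula.Realize, BoundedFormula.realize_all,
    BoundedFormula.realize_ex, BoundedFormula.realize_iff, BoundedFormula.realize_sup,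
    BoundedFormula.realize_bdEqual, BoundedFormula.realize_rel₂, Term.realize_var,
    Sum.elim_inr, Function.comp, Fin.snoc] at h
  simpa [mem] using h

lemma realize_axHp (h : M ⊨ axHp) :
    ∀ x : M, mem x (cHp : M) ↔ ∃ z : M, IsPair z (cA : M) x ∧ mem z (cA : M) := by
  simp only [axHp, memF, mem, Sentence.Realize, Formula.Realize, BoundedFormula.realize_all,
    BoundedFormula.realize_ex, BoundedFormula.realize_iff, BoundedFormula.realize_inf,
    BoundedFormula.realize_rel₂, Term.realize_var, Term.realize_constants, realize_isPairF,
    Sum.elim_inr, Function.comp, Fin.snoc] at h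
  simpa [mem] using h

lemma realize_axA (h : M ⊨ axA) :
    ∀ x : M, mem x (cA : M) ↔ ∃ v w : M, IsPair x v w ∧
      (mem w w ∨ ∀ u : M, mem u w ↔ ∃ z : M, IsPair z v u ∧ mem z v) := by
  simp only [axA, wEqExtractF, memF, mem, Sentence.Realize, Formula.Realize,
    BoundedFormula.realize_all, BoundedFormula.realize_ex, BoundedFormula.realize_iff,
    BoundedFormula.realize_inf, BoundedFormula.realize_sup,
    BoundedFormula.realize_rel₂, Term.realize_var, Term.realize_constants, realize_isPairF,
    Sum.elim_inr, Function.comp, Fin.snoc] at h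
  simpa [mem] using h

end Aux2
/-- `T_H` semantically entails `H⁺ ∈ H⁺`. -/
theorem TH_Hp_mem_Hp :
    TH ⊨ᵇ ((memF (Constants.term cHp) (Constants.term cHp)) : L.Sentence) := by
  rw [Theory.models_sentence_iff]
  intro M
  have hpair := realize_pairAx (M := M)
    (Theory.realize_sentence_of_mem TH (show pairAx ∈ TH by simp [TH]))
  have hA := realize_axA (M := M)
    (Theory.realize_sentence_of_mem TH (show axA ∈ TH by simp [TH]))
  have hHp := realize_axHp (M := M)
    (Theory.realize_sentence_of_mem TH (show axHp ∈ TH by simp [TH]))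
  -- build the pair z = ⟨A, H⁺⟩
  obtain ⟨p, hp⟩ := hpair (cA : M) (cA : M)
  obtain ⟨q, hq⟩ := hpair (cA : M) (cHp : M)
  obtain ⟨z, hz⟩ := hpair p q
  have hzpair : IsPair z (cA : M) (cHp : M) :=
    ⟨p, q, fun x => by rw [hp x, or_self], hq, hz⟩
  have hzA : mem z (cA : M) :=
    (hA z).2 ⟨(cA : M), (cHp : M), hzpair, Or.inr fun u => hHp u⟩
  have hmem : mem (cHp : M) (cHp : M) := (hHp (cHp : M)).2 ⟨z, hzpair, hzA⟩
  simpa [Sentence.Realize, Formula.Realize, memF, mem, BoundedFormula.realize_rel₂] using hmem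

end CoRussellParadox
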